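/- Let $d_1,d_2 > 0$ and $a_{11},a_{12},a_{21},a_{22} > 0$ satisfy $a_{12}^2 < 8a_{11}a_{21}$ and $a_{21}^2 < 8a_{22}a_{12}$. Then there exists $\alpha > 0$ such that for all $u,v \ge 0$ and all $\xi=(\xi_1,\xi_2)\in\mathbb{R}^2$, the matrix $P(u,v) = \begin{pmatrix} d_1+2a_{11}u+a_{12}v & a_{12}u \\ a_{21}v & d_2+a_{21}u+2a_{22}v \end{pmatrix}$ satisfies $(P(u,v)\xi)\cdot\xi \ge \alpha(u+v)|\xi|^2 + d_0|\xi|^2$, where $d_0 = \min(d_1,d_2)$. -/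

import Mathlib

private lemma quad_coercive (A B C α x y : ℝ) (hA : 0 < A - α) (hC : 0 ≤ C - α)
    (h : B ^ 2 ≤ 4 * (A - α) * (C - α)) :
    α * (x ^ 2 + y ^ 2) ≤ A * x ^ 2 + B * x * y + C * y ^ 2 := by
  nlinarith [sq_nonneg (2 * (A - α) * x + B * y), sq_nonneg x, sq_nonneg y,
    mul_nonneg (mul_nonneg hA.le hC) (sq_nonneg y)]

set_option maxHeartbeats 800000 in
theorem skt_P_coercive (d1 d2 a11 a12 a21 a22 : ℝ)
    (hd1 : 0 < d1) (hd2 : 0 < d2)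
    (h11 : 0 < a11) (h12 : 0 < a12) (h21 : 0 < a21) (h22 : 0 < a22)
    (h1 : a12 ^ 2 < 8 * a11 * a21) (h2 : a21 ^ 2 < 8 * a22 * a12) :
    ∃ α > (0:ℝ), ∀ u v : ℝ, 0 ≤ u → 0 ≤ v → ∀ ξ : Fin 2 → ℝ,
      dotProduct
        ((!![d1 + 2*a11*u + a12*v, a12*u; a21*v, d2 + a21*u + 2*a22*v]).mulVec ξ) ξ ≥
        α * (u + v) * (ξ 0 ^ 2 + ξ 1 ^ 2) + min d1 d2 * (ξ 0 ^ 2 + ξ 1 ^ 2) := by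
  set t1 : ℝ := (8 * a11 * a21 - a12 ^ 2) / (8 * (a11 + a21)) with ht1def
  set t2 : ℝ := (8 * a22 * a12 - a21 ^ 2) / (8 * (a22 + a12)) with ht2def
  have hden1 : (0:ℝ) < 8 * (a11 + a21) := by linarith
  have hden2 : (0:ℝ) < 8 * (a22 + a12) := by linarith
  have ht1pos : 0 < t1 := div_pos (by linarith) hden1
  have ht2pos : 0 < t2 := div_pos (by linarith) hden2
  have ht1 : 8 * (a11 + a21) * t1 = 8 * a11 * a21 - a12 ^ 2 := by
    rw [ht1def]
    field_simp
  have ht2 : 8 * (a22 + a12) * t2 = 8 * a22 * a12 - a21 ^ 2 := by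
    rw [ht2def]
    field_simp
  refine ⟨min t1 t2, lt_min ht1pos ht2pos, ?_⟩
  intro u v hu hv ξ
  set α := min t1 t2 with hαdef
  have hα1 : α ≤ t1 := min_le_left _ _
  have hα2 : α ≤ t2 := min_le_right _ _
  have hαpos : 0 < α := lt_min ht1pos ht2pos
  -- coercivity of the u-form
  have hAu : 0 < 2 * a11 - α := by nlinarith [sq_nonneg a12]
  have hCu : 0 ≤ a21 - α := by nlinarith [sq_nonneg a12]
  have hBu : a12 ^ 2 ≤ 4 * (2 * a11 - α) * (a21 - α) := by nlinarith [sq_nonneg α]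
  have hAv : 0 < a12 - α := by nlinarith [sq_nonneg a21]
  have hCv : 0 ≤ 2 * a22 - α := by nlinarith [sq_nonneg a21]
  have hBv : a21 ^ 2 ≤ 4 * (a12 - α) * (2 * a22 - α) := by nlinarith [sq_nonneg α]
  have hqu := quad_coercive (2 * a11) a12 a21 α (ξ 0) (ξ 1) hAu hCu hBu
  have hqv := quad_coercive a12 a21 (2 * a22) α (ξ 0) (ξ 1) hAv hCv hBv
  have hqu' := mul_le_mul_of_nonneg_left hqu hu
  have hqv' := mul_le_mul_of_nonneg_left hqv hv
  have hm1 : min d1 d2 ≤ d1 := min_le_left _ _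
  have hm2 : min d1 d2 ≤ d2 := min_le_right _ _
  show _ ≥ _
  simp [dotProduct, Matrix.mulVec, Fin.sum_univ_two, Matrix.cons_val_zero,
    Matrix.cons_val_one, Matrix.head_cons]
  have hm1' := mul_le_mul_of_nonneg_right hm1 (sq_nonneg (ξ 0))
  have hm2' := mul_le_mul_of_nonneg_right hm2 (sq_nonneg (ξ 1))
  ring_nf
  ring_nf at hqu' hqv' hm1' hm2'
  linarith [hqu', hqv', hm1', hm2']
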